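/- arXiv:2109.04011 — 4 statements merged into one kernel-verified Lean document; each statement's English description precedes it below -/
import Mathlib

section
/- Let p be a prime, n ≥ 1, and consider the fusion ring with basis {g : g ∈ (ℤ/pℤ)^{2n}} ∪ {x_h : h ∈ (ℤ/pℤ)^×} with multiplication g·g' = g+g', g·x_h = x_h, x_g·x_h = p^n x_{gh} when gh ≠ 1, and x_g·x_{g^{-1}} = Σ_{h ∈ (ℤ/pℤ)^{2n}} h. Then the Frobenius–Perron dimension of x_h is p^n for every h, and the total Frobenius–Perron dimension of the ring is p^{2n+1}. -/
/-- Basis of the fusion ring of the character ring of an extraspecial `p`-group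
`p^{1+2n}_±`: group-like elements `g ∈ (ℤ/pℤ)^{2n}` and the noninvertible
elements `x_h`, `h ∈ (ℤ/pℤ)ˣ`. -/
abbrev ESBasis (p n : ℕ) : Type := (Fin (2 * n) → ZMod p) ⊕ (ZMod p)ˣ

/-- Structure constants of the fusion ring with `g·g' = g+g'`, `g·x_h = x_h`,
`x_g·x_h = pⁿ x_{gh}` when `gh ≠ 1`, and `x_g·x_{g⁻¹} = Σ_h h`. -/
def ESmul (p n : ℕ) : ESBasis p n → ESBasis p n → ESBasis p n → ℕ
  | .inl g, .inl g', .inl h => if h = g + g' then 1 else 0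
  | .inl _, .inl _, .inr _ => 0
  | .inl _, .inr h, c => if c = .inr h then 1 else 0
  | .inr h, .inl _, c => if c = .inr h then 1 else 0
  | .inr g, .inr h, .inr c => if g * h ≠ 1 ∧ c = g * h then p ^ n else 0
  | .inr g, .inr h, .inl _ => if g * h = 1 then 1 else 0

/-- in the fusion ring of the character ring of an extraspecial
`p`-group, the Frobenius–Perron dimension of each `x_h` is `pⁿ`, and the total
Frobenius–Perron dimension is `p^(2n+1)`.  (FPdim is characterized as the unique
assignment of positive reals to the basis which is multiplicative with respect
to the structure constants.) -/
theorem stmt3 (p n : ℕ) (hp : p.Prime) [NeZero p] (hn : 1 ≤ n)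
    (d : ESBasis p n → ℝ) (hpos : ∀ b, 0 < d b)
    (hmul : ∀ a b : ESBasis p n,
      d a * d b = ∑ c : ESBasis p n, (ESmul p n a b c : ℝ) * d c) :
    (∀ h : (ZMod p)ˣ, d (.inr h) = (p : ℝ) ^ n) ∧
    (∑ b : ESBasis p n, d b ^ 2) = (p : ℝ) ^ (2 * n + 1) := by
  -- d is 1 on group-like elements
  have hinl : ∀ g : Fin (2 * n) → ZMod p, d (.inl g) = 1 := by
    intro g
    have := hmul (.inl g) (.inr 1)
    rw [show (∑ c : ESBasis p n, (ESmul p n (.inl g) (.inr 1) c : ℝ) * d c)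
        = d (.inr 1) by
      simp [ESmul, Finset.sum_ite_eq']] at this
    have h1 := (hpos (.inr 1)).ne'
    field_simp at this
    exact this
  -- relation A : g*h ≠ 1
  have relA : ∀ g h : (ZMod p)ˣ, g * h ≠ 1 →
      d (.inr g) * d (.inr h) = (p : ℝ) ^ n * d (.inr (g * h)) := by
    intro g h hgh
    have := hmul (.inr g) (.inr h)
    rw [this, Fintype.sum_sum_type]
    simp [ESmul, hgh, Finset.sum_ite_eq', mul_comm]
  -- relation B : g * g⁻¹
  have relB : ∀ g : (ZMod p)ˣ, d (.inr g) * d (.inr g⁻¹) = (p : ℝ) ^ (2 * n) := by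
    intro g
    have := hmul (.inr g) (.inr g⁻¹)
    rw [this, Fintype.sum_sum_type]
    have hcard : (Fintype.card (Fin (2 * n) → ZMod p) : ℝ) = (p : ℝ) ^ (2 * n) := by
      simp [ZMod.card]
    simp only [ESmul, mul_inv_cancel, if_true]
    simp [hinl, hcard]
  have hd1 : d (.inr 1) = (p : ℝ) ^ n := by
    have := relB 1
    simp only [inv_one] at this
    have hsq : d (.inr 1) ^ 2 = ((p : ℝ) ^ n) ^ 2 := by
      rw [sq, this, ← pow_mul, mul_comm n 2]
    have hpn : (0 : ℝ) ≤ (p : ℝ) ^ n := by positivity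
    nlinarith [hpos (Sum.inr (1 : (ZMod p)ˣ)), hsq, hpn]
  -- key induction
  have key : ∀ (k : ℕ) (g : (ZMod p)ˣ),
      d (.inr g) ^ k * (p : ℝ) ^ n = d (.inr (g ^ k)) * ((p : ℝ) ^ n) ^ k := by
    intro k g
    induction k with
    | zero => simp [hd1]
    | succ k ih =>
      by_cases hc : g ^ k * g = 1
      · have hk : g ^ k = g⁻¹ := by
          rw [eq_inv_iff_mul_eq_one]; exact hc
        have hgk1 : g ^ (k + 1) = 1 := by rw [pow_succ, hc]
        calc d (.inr g) ^ (k + 1) * (p : ℝ) ^ n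
            = (d (.inr g) ^ k * (p : ℝ) ^ n) * d (.inr g) := by ring
          _ = (d (.inr (g ^ k)) * ((p : ℝ) ^ n) ^ k) * d (.inr g) := by rw [ih]
          _ = (d (.inr g) * d (.inr g⁻¹)) * ((p : ℝ) ^ n) ^ k := by rw [hk]; ring
          _ = (p : ℝ) ^ (2 * n) * ((p : ℝ) ^ n) ^ k := by rw [relB]
          _ = d (.inr (g ^ (k + 1))) * ((p : ℝ) ^ n) ^ (k + 1) := by
              rw [hgk1, hd1, two_mul, pow_add]; ring
      · have hA := relA (g ^ k) g hc
        calc d (.inr g) ^ (k + 1) * (p : ℝ) ^ n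
            = (d (.inr g) ^ k * (p : ℝ) ^ n) * d (.inr g) := by ring
          _ = (d (.inr (g ^ k)) * ((p : ℝ) ^ n) ^ k) * d (.inr g) := by rw [ih]
          _ = (d (.inr (g ^ k)) * d (.inr g)) * ((p : ℝ) ^ n) ^ k := by ring
          _ = ((p : ℝ) ^ n * d (.inr (g ^ (k + 1)))) * ((p : ℝ) ^ n) ^ k := by
              rw [hA, pow_succ]
          _ = d (.inr (g ^ (k + 1))) * ((p : ℝ) ^ n) ^ (k + 1) := by ring
  have hdh : ∀ h : (ZMod p)ˣ, d (.inr h) = (p : ℝ) ^ n := by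
    intro h
    have ho : orderOf h ≠ 0 := (orderOf_pos h).ne'
    have hk := key (orderOf h) h
    rw [pow_orderOf_eq_one, hd1] at hk
    have hpow : d (.inr h) ^ orderOf h = ((p : ℝ) ^ n) ^ orderOf h := by
      have hpn : (0 : ℝ) < (p : ℝ) ^ n := by
        have : (0:ℝ) < (p:ℝ) := by exact_mod_cast hp.pos
        positivity
      exact mul_right_cancel₀ hpn.ne' (by rw [hk]; ring)
    have h1 : (0:ℝ) ≤ d (.inr h) := (hpos _).le
    have h2 : (0:ℝ) ≤ (p : ℝ) ^ n := by positivity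
    exact (pow_left_strictMonoOn₀ ho).injOn h1 h2 hpow
  refine ⟨hdh, ?_⟩
  rw [Fintype.sum_sum_type]
  simp only [hinl, hdh, one_pow]
  rw [Finset.sum_const, Finset.sum_const]
  have hcard1 : (Fintype.card (Fin (2 * n) → ZMod p) : ℝ) = (p : ℝ) ^ (2 * n) := by
    simp [ZMod.card]
  have hcard2 : Fintype.card (ZMod p)ˣ = p - 1 := by
    rw [ZMod.card_units_eq_totient, Nat.totient_prime hp]
  simp only [Finset.card_univ, nsmul_eq_mul, hcard1, hcard2]
  have hc2 : ((p - 1 : ℕ) : ℝ) = (p : ℝ) - 1 := by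
    rw [Nat.cast_sub hp.one_le]; norm_num
  rw [hc2, ← pow_mul, mul_comm n 2]
  calc (p : ℝ) ^ (2 * n) * 1 + ((p : ℝ) - 1) * (p : ℝ) ^ (2 * n)
      = (p : ℝ) ^ (2 * n) * (p : ℝ) := by ring
    _ = (p : ℝ) ^ (2 * n + 1) := (pow_succ _ _).symm
end

section
/- With S the 11×11 matrix of the previous context and dimensions d = (1,1,1,1,2,2,2,2,2,2,2), the Verlinde numbers N_{y,z}^w = (1/32)·Σ_x S_{x,y}S_{x,z}\overline{S_{x,w}}/d_x are nonnegative integers for all y,z,w. -/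
open Matrix

/-- The `S`-matrix of equation (4) with signs `ε₁ = ε₂ = ε₃ = 1`. -/
noncomputable def Smat : Matrix (Fin 11) (Fin 11) ℝ :=
  let r : ℝ := 2 * Real.sqrt 2
  !![1, 1, 1, 1, 2,  2,  2,  2,  2,  2,  2;
     1, 1, 1, 1, 2,  2,  2, -2, -2, -2, -2;
     1, 1, 1, 1, 2, -2, -2,  2,  2, -2, -2;
     1, 1, 1, 1, 2, -2, -2, -2, -2,  2,  2;
     2, 2, 2, 2, -4, 0,  0,  0,  0,  0,  0;
     2, 2, -2, -2, 0, r, -r, 0, 0, 0, 0;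
     2, 2, -2, -2, 0, -r, r, 0, 0, 0, 0;
     2, -2, 2, -2, 0, 0, 0, r, -r, 0, 0;
     2, -2, 2, -2, 0, 0, 0, -r, r, 0, 0;
     2, -2, -2, 2, 0, 0, 0, 0, 0, r, -r;
     2, -2, -2, 2, 0, 0, 0, 0, 0, -r, r]

/-- Integral version of the `S`-matrix, with values in `ℤ√2`. -/
def Sd : Matrix (Fin 11) (Fin 11) (ℤ√2) :=
  let r : ℤ√2 := ⟨0, 2⟩
  !![1, 1, 1, 1, 2,  2,  2,  2,  2,  2,  2;
     1, 1, 1, 1, 2,  2,  2, -2, -2, -2, -2;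
     1, 1, 1, 1, 2, -2, -2,  2,  2, -2, -2;
     1, 1, 1, 1, 2, -2, -2, -2, -2,  2,  2;
     2, 2, 2, 2, -4, 0,  0,  0,  0,  0,  0;
     2, 2, -2, -2, 0, r, -r, 0, 0, 0, 0;
     2, 2, -2, -2, 0, -r, r, 0, 0, 0, 0;
     2, -2, 2, -2, 0, 0, 0, r, -r, 0, 0;
     2, -2, 2, -2, 0, 0, 0, -r, r, 0, 0;
     2, -2, -2, 2, 0, 0, 0, 0, 0, r, -r;
     2, -2, -2, 2, 0, 0, 0, 0, 0, -r, r]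

/-- The `S`-matrix with each row divided by its dimension, with values in `ℤ√2`. -/
def Td : Matrix (Fin 11) (Fin 11) (ℤ√2) :=
  let s : ℤ√2 := ⟨0, 1⟩
  !![1, 1, 1, 1, 2,  2,  2,  2,  2,  2,  2;
     1, 1, 1, 1, 2,  2,  2, -2, -2, -2, -2;
     1, 1, 1, 1, 2, -2, -2,  2,  2, -2, -2;
     1, 1, 1, 1, 2, -2, -2, -2, -2,  2,  2;
     1, 1, 1, 1, -2, 0,  0,  0,  0,  0,  0;
     1, 1, -1, -1, 0, s, -s, 0, 0, 0, 0;
     1, 1, -1, -1, 0, -s, s, 0, 0, 0, 0;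
     1, -1, 1, -1, 0, 0, 0, s, -s, 0, 0;
     1, -1, 1, -1, 0, 0, 0, -s, s, 0, 0;
     1, -1, -1, 1, 0, 0, 0, 0, 0, s, -s;
     1, -1, -1, 1, 0, 0, 0, 0, 0, -s, s]

/-- The embedding of `ℤ√2` into `ℝ`. -/
noncomputable def φ : ℤ√2 →+* ℝ := Zsqrtd.toReal (by norm_num)

section ConsVal
variable {α : Type*} {m : ℕ}

lemma cons_val_five' (x : α) (u : Fin (m+5) → α) :
    vecCons x u 5 = vecHead (vecTail (vecTail (vecTail (vecTail u)))) := rfl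
lemma cons_val_six' (x : α) (u : Fin (m+6) → α) :
    vecCons x u 6 = vecHead (vecTail (vecTail (vecTail (vecTail (vecTail u))))) := rfl
lemma cons_val_seven' (x : α) (u : Fin (m+7) → α) :
    vecCons x u 7 = vecHead (vecTail (vecTail (vecTail (vecTail (vecTail (vecTail u)))))) := rfl
lemma cons_val_eight' (x : α) (u : Fin (m+8) → α) :
    vecCons x u 8 =
      vecHead (vecTail (vecTail (vecTail (vecTail (vecTail (vecTail (vecTail u))))))) := rfl
lemma cons_val_nine' (x : α) (u : Fin (m+9) → α) :
    vecCons x u 9 =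
      vecHead (vecTail (vecTail (vecTail (vecTail (vecTail (vecTail (vecTail (vecTail u)))))))) :=
  rfl
lemma cons_val_ten' (x : α) (u : Fin (m+10) → α) :
    vecCons x u 10 =
      vecHead (vecTail (vecTail (vecTail (vecTail (vecTail (vecTail (vecTail (vecTail
        (vecTail u))))))))) := rfl

end ConsVal

set_option maxHeartbeats 4000000 in
lemma hS : ∀ x y : Fin 11, Smat x y = φ (Sd x y) := by
  intro x y
  fin_cases x <;> fin_cases y <;>
    norm_num [Smat, Sd, φ, Zsqrtd.toReal_apply, Matrix.cons_val', Matrix.cons_val_zero,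
      Matrix.cons_val_one, Matrix.head_cons, Matrix.empty_val', Matrix.cons_val_fin_one,
      cons_val_five', cons_val_six', cons_val_seven', cons_val_eight', cons_val_nine',
      cons_val_ten', Matrix.vecHead, Matrix.vecTail]

set_option maxHeartbeats 4000000 in
lemma hT : ∀ x y : Fin 11, Smat x y = Smat x 0 * φ (Td x y) := by
  intro x y
  fin_cases x <;> fin_cases y <;>
    norm_num [Smat, Td, φ, Zsqrtd.toReal_apply, Matrix.cons_val', Matrix.cons_val_zero,
      Matrix.cons_val_one, Matrix.head_cons, Matrix.empty_val', Matrix.cons_val_fin_one,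
      cons_val_five', cons_val_six', cons_val_seven', cons_val_eight', cons_val_nine',
      cons_val_ten', Matrix.vecHead, Matrix.vecTail]

lemma h0 : ∀ x : Fin 11, Smat x 0 ≠ 0 := by
  intro x
  fin_cases x <;>
    norm_num [Smat, Matrix.cons_val', Matrix.cons_val_zero, Matrix.cons_val_one,
      Matrix.head_cons, Matrix.empty_val', Matrix.cons_val_fin_one, cons_val_five',
      cons_val_six', cons_val_seven', cons_val_eight', cons_val_nine', cons_val_ten',
      Matrix.vecHead, Matrix.vecTail]

lemma hdiv (x y : Fin 11) : Smat x y / Smat x 0 = φ (Td x y) := by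
  rw [hT x y, mul_div_cancel_left₀ _ (h0 x)]

set_option maxHeartbeats 4000000 in
lemma key : ∀ y z w : Fin 11,
    (∑ x : Fin 11, Sd x y * Sd x z * Td x w).im = 0 ∧
    0 ≤ (∑ x : Fin 11, Sd x y * Sd x z * Td x w).re ∧
    (∑ x : Fin 11, Sd x y * Sd x z * Td x w).re % 32 = 0 := by decide

/-- with `S` the matrix of equation (4) (signs `ε₁ = ε₂ = ε₃ = 1`)
and dimensions `d_x = S_{x,0}` given by the first column, the Verlinde numbers
`N_{y,z}^w = (1/32)·Σ_x S_{x,y} S_{x,z} S_{x,w} / d_x` are nonnegative integers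
(the matrix is real, so no conjugation is needed). -/
theorem stmt13 :
    ∀ y z w : Fin 11, ∃ m : ℕ,
      (1 / 32 : ℝ) * ∑ x : Fin 11, Smat x y * Smat x z * Smat x w / Smat x 0
        = (m : ℝ) := by
  intro y z w
  obtain ⟨him, hnn, hmod⟩ := key y z w
  set v : ℤ√2 := ∑ x : Fin 11, Sd x y * Sd x z * Td x w with hv
  have hsum : ∑ x : Fin 11, Smat x y * Smat x z * Smat x w / Smat x 0 = φ v := by
    rw [hv, map_sum]
    refine Finset.sum_congr rfl fun x _ => ?_
    rw [_root_.map_mul, _root_.map_mul, ← hS, ← hS, ← hdiv, mul_div_assoc]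
  have hφ : φ v = (v.re : ℝ) := by
    rw [φ, Zsqrtd.toReal_apply, him]
    push_cast
    ring
  have hq : v.re = 32 * ((v.re / 32).toNat : ℤ) := by
    rw [Int.toNat_of_nonneg (Int.ediv_nonneg hnn (by norm_num)),
      Int.mul_ediv_cancel' (Int.dvd_of_emod_eq_zero hmod)]
  obtain ⟨m, hm⟩ : ∃ m : ℕ, v.re = 32 * (m : ℤ) := ⟨(v.re / 32).toNat, hq⟩
  refine ⟨m, ?_⟩
  rw [hsum, hφ, hm]
  push_cast
  ring
end

section
/- Fix τ ∈ {1/2, −1/2} and the bicharacter χ^1 on E_2 (χ(g_1,g_1)=χ(g_2,g_2)=−1, χ(g_1,g_2)=1). The set of pairs (q, α), where q is a quadratic form for χ^1 and α^2 = τ·Σ_{g∈E_2} q(g), has exactly 6 equivalence classes under the relation (q,α) ~ (q∘f, α) for f ∈ Aut(E_2) preserving q. -/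
/-- The bicharacter `χ¹` on `E₂ = (ℤ/2ℤ)²`:
`χ(g₁,g₁) = χ(g₂,g₂) = -1`, `χ(g₁,g₂) = χ(g₂,g₁) = 1`. -/
def chi1 (g h : ZMod 2 × ZMod 2) : ℂ :=
  (-1 : ℂ) ^ (g.1.val * h.1.val + g.2.val * h.2.val)

noncomputable def Qf (a b : ℂ) : (ZMod 2 × ZMod 2) → ℂ := fun g =>
  (if g.1 = 1 then a else 1) * (if g.2 = 1 then b else 1)

lemma zmod2_cases (u : ZMod 2) : u = 0 ∨ u = 1 := by revert u; decide

lemma val_facts : (ZMod.val (1 : ZMod 2)) = 1 ∧ ((1 + 1 : ZMod 2)) = 0 ∧ (ZMod.val (0 : ZMod 2)) = 0 := by decide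

lemma Qf_zero (a b : ℂ) : Qf a b 0 = 1 := by simp [Qf]

lemma Qf_ne_zero (a b : ℂ) (ha : a ≠ 0) (hb : b ≠ 0) (g) : Qf a b g ≠ 0 := by
  have : ∀ c : ℂ, c ≠ 0 → ∀ u : ZMod 2, (if u = 1 then c else 1) ≠ 0 := by
    intro c hc u; split <;> simp [hc]
  exact mul_ne_zero (this a ha _) (this b hb _)

lemma Qf_quad (a b : ℂ) (ha : a ^ 2 = -1) (hb : b ^ 2 = -1) :
    ∀ g h, Qf a b g * Qf a b h = chi1 g h * Qf a b (g + h) := by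
  obtain ⟨v1, v2, v0⟩ := val_facts
  rintro ⟨g1, g2⟩ ⟨h1, h2⟩
  rcases zmod2_cases g1 with rfl | rfl <;> rcases zmod2_cases g2 with rfl | rfl <;>
    rcases zmod2_cases h1 with rfl | rfl <;> rcases zmod2_cases h2 with rfl | rfl <;>
    simp [Qf, chi1, v1, v2, v0, Prod.ext_iff] <;>
    first
      | ring1
      | linear_combination ha
      | linear_combination hb
      | linear_combination b ^ 2 * ha - hb
      | linear_combination b * ha
      | linear_combination a * hb
      | linear_combination a * b * hb
      | linear_combination b ^ 2 * ha + (a ^ 2 + 1) * hb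
      | linear_combination a * b * ha + hb

lemma Qf_sum (a b : ℂ) : ∑ g : ZMod 2 × ZMod 2, Qf a b g = (1 + a) * (1 + b) := by
  rw [Fintype.sum_prod_type]
  show ∑ x : Fin 2, ∑ y : Fin 2, _ = _
  rw [Fin.sum_univ_two, Fin.sum_univ_two, Fin.sum_univ_two]
  show Qf a b (0,0) + Qf a b (0,1) + (Qf a b (1,0) + Qf a b (1,1)) = _
  simp [Qf]
  ring

lemma sq_eq_neg_one (z : ℂ) (h : z ^ 2 = -1) : z = Complex.I ∨ z = -Complex.I := by
  have h0 : (z - Complex.I) * (z + Complex.I) = 0 := by linear_combination h - Complex.I_sq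
  rcases mul_eq_zero.1 h0 with h' | h'
  · exact Or.inl (sub_eq_zero.1 h')
  · exact Or.inr (eq_neg_of_add_eq_zero_left h')

lemma qsq (q : (ZMod 2 × ZMod 2) → ℂ) (hq0 : q 0 = 1)
    (hq : ∀ g h, q g * q h = chi1 g h * q (g + h)) :
    q (1,0) ^ 2 = -1 ∧ q (0,1) ^ 2 = -1 := by
  obtain ⟨v1, v2, v0⟩ := val_facts
  constructor
  · have h := hq (1,0) (1,0)
    rw [show ((1,0) + (1,0) : ZMod 2 × ZMod 2) = 0 by decide, hq0, mul_one,
      show chi1 (1,0) (1,0) = -1 by simp [chi1, v1, v0]] at h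
    rw [sq]; exact h
  · have h := hq (0,1) (0,1)
    rw [show ((0,1) + (0,1) : ZMod 2 × ZMod 2) = 0 by decide, hq0, mul_one,
      show chi1 (0,1) (0,1) = -1 by simp [chi1, v1, v0]] at h
    rw [sq]; exact h

lemma qdet (q : (ZMod 2 × ZMod 2) → ℂ) (hq0 : q 0 = 1)
    (hq : ∀ g h, q g * q h = chi1 g h * q (g + h)) :
    ∀ g, q g = Qf (q (1,0)) (q (0,1)) g := by
  obtain ⟨v1, v2, v0⟩ := val_facts
  have hx := hq (1,0) (0,1)
  rw [show ((1,0) + (0,1) : ZMod 2 × ZMod 2) = (1,1) by decide,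
    show chi1 (1,0) (0,1) = 1 by simp [chi1, v1, v0], one_mul] at hx
  rintro ⟨g1, g2⟩
  rcases zmod2_cases g1 with rfl | rfl <;> rcases zmod2_cases g2 with rfl | rfl
  · show q 0 = _
    rw [hq0]; simp [Qf]
  · simp [Qf]
  · simp [Qf]
  · simp [Qf]
    exact hx.symm

/-- Braiding data `(q, α)` for the Tambara–Yamagami category `C(χ¹₂, τ)`:
`q` is a quadratic form for `χ¹` and `α² = τ·Σ_g q(g)`. -/
def TYData (τ : ℝ) : Type :=
  {qa : ((ZMod 2 × ZMod 2) → ℂ) × ℂ //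
    (qa.1 0 = 1 ∧ (∀ g, qa.1 g ≠ 0) ∧
      ∀ g h, qa.1 g * qa.1 h = chi1 g h * qa.1 (g + h)) ∧
    qa.2 ^ 2 = (τ : ℂ) * ∑ g : ZMod 2 × ZMod 2, qa.1 g}

lemma ty_sum (τ : ℝ) (x : TYData τ) :
    ∑ g : ZMod 2 × ZMod 2, x.1.1 g = (1 + x.1.1 (1,0)) * (1 + x.1.1 (0,1)) := by
  obtain ⟨⟨hq0, hne, hq⟩, hα⟩ := x.2
  rw [Finset.sum_congr rfl fun g _ => qdet x.1.1 hq0 hq g, Qf_sum]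

lemma ty_key (τ : ℝ) (x : TYData τ) :
    x.1.2 ^ 2 = 2 * (τ : ℂ) * Complex.I ∨ x.1.2 ^ 2 = 2 * (τ : ℂ) ∨
      x.1.2 ^ 2 = -(2 * (τ : ℂ) * Complex.I) := by
  obtain ⟨⟨hq0, hne, hq⟩, hα⟩ := x.2
  obtain ⟨hs2, ht2⟩ := qsq x.1.1 hq0 hq
  have hsum := ty_sum τ x
  rcases sq_eq_neg_one _ hs2 with hs | hs <;> rcases sq_eq_neg_one _ ht2 with ht | ht
  · left; rw [hα, hsum, hs, ht]; linear_combination (τ : ℂ) * Complex.I_sq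
  · right; left; rw [hα, hsum, hs, ht]; linear_combination -(τ : ℂ) * Complex.I_sq
  · right; left; rw [hα, hsum, hs, ht]; linear_combination -(τ : ℂ) * Complex.I_sq
  · right; right; rw [hα, hsum, hs, ht]; linear_combination (τ : ℂ) * Complex.I_sq

/-- `(q,α) ~ (q∘f, α)` for `f ∈ Aut(E₂)` preserving `χ¹`. -/
def tySetoid (τ : ℝ) : Setoid (TYData τ) where
  r a b := a.1.2 = b.1.2 ∧
    ∃ f : (ZMod 2 × ZMod 2) ≃+ (ZMod 2 × ZMod 2),
      (∀ g h, chi1 (f g) (f h) = chi1 g h) ∧ ∀ g, b.1.1 g = a.1.1 (f g)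
  iseqv := by
    constructor
    · intro a
      exact ⟨rfl, AddEquiv.refl _, fun _ _ => rfl, fun _ => rfl⟩
    · rintro a b ⟨hα, f, hχ, hq⟩
      refine ⟨hα.symm, f.symm, fun g h => ?_, fun g => ?_⟩
      · have := hχ (f.symm g) (f.symm h)
        rw [f.apply_symm_apply, f.apply_symm_apply] at this
        exact this.symm
      · have := hq (f.symm g)
        rw [f.apply_symm_apply] at this
        exact this.symm
    · rintro a b c ⟨hα, f, hχ, hq⟩ ⟨hα', f', hχ', hq'⟩
      refine ⟨hα.trans hα', f'.trans f, fun g h => ?_, fun g => ?_⟩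
      · rw [AddEquiv.trans_apply, AddEquiv.trans_apply, hχ, hχ']
      · rw [hq' g, hq (f' g), AddEquiv.trans_apply]

lemma ty_inj (τ : ℝ) (hτ0 : (τ : ℂ) ≠ 0) (x y : TYData τ) (hα : x.1.2 = y.1.2) :
    (tySetoid τ).r x y := by
  obtain ⟨⟨hx0, hxne, hxq⟩, hxα⟩ := x.2
  obtain ⟨⟨hy0, hyne, hyq⟩, hyα⟩ := y.2
  obtain ⟨hs2, ht2⟩ := qsq x.1.1 hx0 hxq
  obtain ⟨hu2, hv2⟩ := qsq y.1.1 hy0 hyq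
  have hqdx := qdet x.1.1 hx0 hxq
  have hqdy := qdet y.1.1 hy0 hyq
  have hsum : (1 + x.1.1 (1,0)) * (1 + x.1.1 (0,1))
      = (1 + y.1.1 (1,0)) * (1 + y.1.1 (0,1)) := by
    apply mul_left_cancel₀ hτ0
    rw [← ty_sum τ x, ← ty_sum τ y, ← hxα, ← hyα, hα]
  rcases sq_eq_neg_one _ hs2 with hs | hs <;> rcases sq_eq_neg_one _ ht2 with ht | ht <;>
    rcases sq_eq_neg_one _ hu2 with hu | hu <;> rcases sq_eq_neg_one _ hv2 with hv | hv <;>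
    first
      | (refine ⟨hα, AddEquiv.refl _, fun _ _ => rfl, fun g => ?_⟩;
         show y.1.1 g = x.1.1 g;
         rw [hqdy g, hqdx g, hs, ht, hu, hv]; done)
      | (refine ⟨hα, AddEquiv.prodComm,
          fun g h => by show chi1 (g.2, g.1) (h.2, h.1) = chi1 g h;
                        simp only [chi1]; rw [Nat.add_comm],
          fun g => ?_⟩;
         show y.1.1 g = x.1.1 (g.2, g.1);
         rw [hqdy g, hqdx (g.2, g.1), hs, ht, hu, hv];
         simp [Qf, mul_comm]; done)
      | (exfalso; rw [hs, ht, hu, hv] at hsum;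
         simp [Complex.ext_iff] at hsum; norm_num at hsum)

/-- for `τ = ±1/2`, the pairs `(q, α)` with `q` a quadratic form
for `χ¹` on `E₂` and `α² = τ·Σ_g q(g)` form exactly 6 equivalence classes
under `(q, α) ~ (q∘f, α)` for automorphisms `f` preserving `χ¹`. -/
theorem stmt15 (τ : ℝ) (hτ : τ = 1 / 2 ∨ τ = -(1 / 2)) :
    Nat.card (Quotient (tySetoid τ)) = 6 := by
  classical
  have hτ0 : (τ : ℂ) ≠ 0 := by
    rcases hτ with rfl | rfl <;> norm_num
  set c1 : ℂ := 2 * (τ : ℂ) * Complex.I with hc1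
  set c2 : ℂ := 2 * (τ : ℂ) with hc2
  let P : ℂ → Prop := fun a => a ^ 2 = c1 ∨ a ^ 2 = c2 ∨ a ^ 2 = -c1
  let F : Quotient (tySetoid τ) → {a : ℂ // P a} :=
    Quotient.lift (fun x : TYData τ => (⟨x.1.2, ty_key τ x⟩ : {a : ℂ // P a}))
      (fun x y h => Subtype.ext h.1)
  have hbij : Function.Bijective F := by
    constructor
    · intro u v
      refine Quotient.inductionOn₂ u v (fun x y h => ?_)
      exact Quotient.sound (ty_inj τ hτ0 x y (congrArg Subtype.val h))
    · rintro ⟨a, ha⟩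
      rcases ha with h | h | h
      · refine ⟨Quotient.mk _ ⟨⟨Qf Complex.I Complex.I, a⟩,
          ⟨⟨Qf_zero _ _, Qf_ne_zero _ _ Complex.I_ne_zero Complex.I_ne_zero,
            Qf_quad _ _ Complex.I_sq Complex.I_sq⟩, ?_⟩⟩, Subtype.ext rfl⟩
        rw [Qf_sum]
        linear_combination h - (τ : ℂ) * Complex.I_sq
      · refine ⟨Quotient.mk _ ⟨⟨Qf Complex.I (-Complex.I), a⟩,
          ⟨⟨Qf_zero _ _, Qf_ne_zero _ _ Complex.I_ne_zero (neg_ne_zero.2 Complex.I_ne_zero),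
            Qf_quad _ _ Complex.I_sq (by rw [neg_sq]; exact Complex.I_sq)⟩, ?_⟩⟩, Subtype.ext rfl⟩
        rw [Qf_sum]
        linear_combination h + (τ : ℂ) * Complex.I_sq
      · refine ⟨Quotient.mk _ ⟨⟨Qf (-Complex.I) (-Complex.I), a⟩,
          ⟨⟨Qf_zero _ _, Qf_ne_zero _ _ (neg_ne_zero.2 Complex.I_ne_zero) (neg_ne_zero.2 Complex.I_ne_zero),
            Qf_quad _ _ (by rw [neg_sq]; exact Complex.I_sq) (by rw [neg_sq]; exact Complex.I_sq)⟩, ?_⟩⟩,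
          Subtype.ext rfl⟩
        rw [Qf_sum]
        linear_combination h - (τ : ℂ) * Complex.I_sq
  rw [Nat.card_eq_of_bijective F hbij]
  -- roots
  obtain ⟨r1, hr1⟩ := IsAlgClosed.exists_pow_nat_eq c1 (n := 2) zero_lt_two
  obtain ⟨r2, hr2⟩ := IsAlgClosed.exists_pow_nat_eq c2 (n := 2) zero_lt_two
  obtain ⟨r3, hr3⟩ := IsAlgClosed.exists_pow_nat_eq (-c1) (n := 2) zero_lt_two
  -- distinctness of the three squares
  have hneg : ∀ z : ℂ, z ≠ 0 → z ≠ -z := by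
    intro z hz e
    apply hz
    have h2 : (2 : ℂ) * z = 0 := by linear_combination e
    rcases mul_eq_zero.1 h2 with h' | h'
    · norm_num at h'
    · exact h'
  have hmix : ∀ z w : ℂ, z ^ 2 ≠ w ^ 2 → z ≠ w := fun z w h e => h (by rw [e])
  have c2ne0 : c2 ≠ 0 := by simp [hc2, hτ0]
  have c1ne0 : c1 ≠ 0 := by
    rw [hc1]; exact mul_ne_zero (mul_ne_zero two_ne_zero hτ0) Complex.I_ne_zero
  have hI1 : Complex.I ≠ 1 := by
    intro h; have := congrArg Complex.im h; simp at this
  have c12 : c1 ≠ c2 := fun h => hI1 (mul_left_cancel₀ c2ne0 (by linear_combination h))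
  have c13 : c1 ≠ -c1 := hneg _ c1ne0
  have c23 : c2 ≠ -c1 := by
    intro h
    have h1 : (1 : ℂ) = -Complex.I := mul_left_cancel₀ c2ne0 (by linear_combination h)
    have := congrArg Complex.re h1
    simp at this
  -- the six roots are distinct
  have hr1' : (-r1) ^ 2 = c1 := by rw [neg_sq]; exact hr1
  have hr2' : (-r2) ^ 2 = c2 := by rw [neg_sq]; exact hr2
  have hr3' : (-r3) ^ 2 = -c1 := by rw [neg_sq]; exact hr3
  have r1ne0 : r1 ≠ 0 := fun e => c1ne0 (by rw [← hr1, e]; ring)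
  have r2ne0 : r2 ≠ 0 := fun e => c2ne0 (by rw [← hr2, e]; ring)
  have r3ne0 : r3 ≠ 0 := fun e => (neg_ne_zero.2 c1ne0) (by rw [← hr3, e]; ring)
  have n11 : r1 ≠ -r1 := hneg _ r1ne0
  have n22 : r2 ≠ -r2 := hneg _ r2ne0
  have n33 : r3 ≠ -r3 := hneg _ r3ne0
  have n12 : r1 ≠ r2 := hmix _ _ (by rw [hr1, hr2]; exact c12)
  have n12' : r1 ≠ -r2 := hmix _ _ (by rw [hr1, hr2']; exact c12)
  have n13 : r1 ≠ r3 := hmix _ _ (by rw [hr1, hr3]; exact c13)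
  have n13' : r1 ≠ -r3 := hmix _ _ (by rw [hr1, hr3']; exact c13)
  have m12 : -r1 ≠ r2 := hmix _ _ (by rw [hr1', hr2]; exact c12)
  have m12' : -r1 ≠ -r2 := hmix _ _ (by rw [hr1', hr2']; exact c12)
  have m13 : -r1 ≠ r3 := hmix _ _ (by rw [hr1', hr3]; exact c13)
  have m13' : -r1 ≠ -r3 := hmix _ _ (by rw [hr1', hr3']; exact c13)
  have n23 : r2 ≠ r3 := hmix _ _ (by rw [hr2, hr3]; exact c23)
  have n23' : r2 ≠ -r3 := hmix _ _ (by rw [hr2, hr3']; exact c23)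
  have m23 : -r2 ≠ r3 := hmix _ _ (by rw [hr2', hr3]; exact c23)
  have m23' : -r2 ≠ -r3 := hmix _ _ (by rw [hr2', hr3']; exact c23)
  -- identify the subtype with an explicit finset
  have hiff : ∀ a : ℂ, P a ↔ a ∈ ({r1, -r1, r2, -r2, r3, -r3} : Finset ℂ) := by
    intro a
    constructor
    · rintro (h | h | h)
      · have h0 : (a - r1) * (a + r1) = 0 := by linear_combination h - hr1
        rcases mul_eq_zero.1 h0 with h' | h'
        · simp [sub_eq_zero.1 h']
        · simp [eq_neg_of_add_eq_zero_left h']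
      · have h0 : (a - r2) * (a + r2) = 0 := by linear_combination h - hr2
        rcases mul_eq_zero.1 h0 with h' | h'
        · simp [sub_eq_zero.1 h']
        · simp [eq_neg_of_add_eq_zero_left h']
      · have h0 : (a - r3) * (a + r3) = 0 := by linear_combination h - hr3
        rcases mul_eq_zero.1 h0 with h' | h'
        · simp [sub_eq_zero.1 h']
        · simp [eq_neg_of_add_eq_zero_left h']
    · intro h
      simp only [Finset.mem_insert, Finset.mem_singleton] at h
      rcases h with rfl | rfl | rfl | rfl | rfl | rfl
      · exact Or.inl hr1
      · exact Or.inl hr1'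
      · exact Or.inr (Or.inl hr2)
      · exact Or.inr (Or.inl hr2')
      · exact Or.inr (Or.inr hr3)
      · exact Or.inr (Or.inr hr3')
  rw [Nat.card_congr (Equiv.subtypeEquivRight hiff), Nat.card_eq_finsetCard]
  rw [Finset.card_insert_of_notMem (by
      simp only [Finset.mem_insert, Finset.mem_singleton]; push_neg
      exact ⟨n11, n12, n12', n13, n13'⟩),
    Finset.card_insert_of_notMem (by
      simp only [Finset.mem_insert, Finset.mem_singleton]; push_neg
      exact ⟨m12, m12', m13, m13'⟩),
    Finset.card_insert_of_notMem (by
      simp only [Finset.mem_insert, Finset.mem_singleton]; push_neg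
      exact ⟨n22, n23, n23'⟩),
    Finset.card_insert_of_notMem (by
      simp only [Finset.mem_insert, Finset.mem_singleton]; push_neg
      exact ⟨m23, m23'⟩),
    Finset.card_insert_of_notMem (by
      simp only [Finset.mem_singleton]; exact n33),
    Finset.card_singleton]
end

section
/- Suppose y, y' are basis elements of dimension 2 in a modular datum of total dimension 32 with y' = g⊗y for an invertible g satisfying S_{g,y}/dim(y) = θ_{g⊗y}/θ_g θ_y and θ_g = 1. If the orthogonality relation Σ_z S_{y,z}S_{x,z} = 0 holds where the only nonzero contributions are from the four invertible elements z with S_{x,z} = 2 and S_{y,z} = (θ_{z⊗y}/θ_y)·2, then θ_y = −θ_{y'}. -/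
open scoped Classical in
/-- in the modular datum of total dimension 32 from Section 3.1,
with invertibles `ι z` for `z ∈ E₂ = (ℤ/2ℤ)²` of trivial twist, `y, y'` basis
elements of dimension 2 with `y' = g₀⊗y` for an invertible `g₀`, orbit of `y`
under `E₂` equal to `{y, y'}` (each hit by exactly two group elements),
`S_{y,z} = (θ_{z⊗y}/θ_y)·2` for invertible `z` (balancing), `S_{x,z} = 2` for
invertible `z`, `S_{x,y''} = 0` otherwise, and the orthogonality relation
`Σ_z S_{y,z} S_{x,z} = 0` whose only nonzero contributions come from the four
invertibles: then `θ_y = -θ_{y'}`. -/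
theorem stmt19 {O : Type} (ι : ZMod 2 × ZMod 2 → O) (mul : O → O → O)
    (θ : O → ℂ) (dim : O → ℂ) (S : O → O → ℂ) (x y y' : O)
    (hdimy : dim y = 2) (hdimy' : dim y' = 2)
    (hθinv : ∀ z, θ (ι z) = 1) (hθy : θ y ≠ 0)
    (g₀ : ZMod 2 × ZMod 2) (hy' : y' = mul (ι g₀) y) (hne : y ≠ y')
    (horb : ∀ z, mul (ι z) y = y ∨ mul (ι z) y = y')
    (hstab : (Finset.univ.filter
      (fun z : ZMod 2 × ZMod 2 => mul (ι z) y = y)).card = 2)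
    (hSy : ∀ z, S y (ι z) = θ (mul (ι z) y) / θ y * 2)
    (hSx : ∀ z, S x (ι z) = 2)
    (horth : (∑ z : ZMod 2 × ZMod 2, S y (ι z) * S x (ι z)) = 0) :
    θ y = -θ y' := by
  have hsum : (∑ z : ZMod 2 × ZMod 2, θ (mul (ι z) y)) = 2 * θ y + 2 * θ y' := by
    rw [← Finset.sum_filter_add_sum_filter_not Finset.univ
      (fun z => mul (ι z) y = y)]
    have h1 : (∑ z ∈ Finset.univ.filter (fun z : ZMod 2 × ZMod 2 => mul (ι z) y = y),
        θ (mul (ι z) y)) = 2 * θ y := by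
      rw [Finset.sum_congr rfl (fun z hz => by
        rw [(Finset.mem_filter.mp hz).2]), Finset.sum_const, hstab]
      ring
    have hcard : (Finset.univ.filter
        (fun z : ZMod 2 × ZMod 2 => ¬ mul (ι z) y = y)).card = 2 := by
      have := Finset.card_filter_add_card_filter_not (s := (Finset.univ : Finset (ZMod 2 × ZMod 2))) (p := fun z => mul (ι z) y = y)
      simp only [Finset.card_univ] at this
      have h4 : Fintype.card (ZMod 2 × ZMod 2) = 4 := by decide
      omega
    have h2 : (∑ z ∈ Finset.univ.filter (fun z : ZMod 2 × ZMod 2 => ¬ mul (ι z) y = y),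
        θ (mul (ι z) y)) = 2 * θ y' := by
      rw [Finset.sum_congr rfl (fun z hz => by
        have := (Finset.mem_filter.mp hz).2
        rcases horb z with h | h
        · exact absurd h this
        · rw [h]), Finset.sum_const, hcard]
      ring
    rw [h1, h2]
  have horth' : (∑ z : ZMod 2 × ZMod 2, θ (mul (ι z) y)) / θ y * 4 = 0 := by
    rw [← horth, Finset.sum_div, Finset.sum_mul]
    exact Finset.sum_congr rfl (fun z _ => by rw [hSy, hSx]; ring)
  rw [hsum] at horth'
  field_simp at horth'
  linear_combination horth' / 8
end
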